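/- Let n ≥ 1, let w be a permutation of {1,…,n}, and let λ ∈ ℚⁿ. Set c := max_a λ_a and E := { a : λ_a = c }. Define ν ∈ ℚⁿ by ν_a := (1/|O|) Σ_{b∈O} λ_b, where O is the orbit of a under the cyclic group generated by w. If the reflection length of w is strictly less than |E|, then there exists an index a with ν_a = c. -/

import Mathlib

/-- The reflection length of a permutation: the minimal number of transpositions
whose product is `w`. -/
noncomputable def reflLength {n : ℕ} (w : Equiv.Perm (Fin n)) : ℕ :=
  sInf {k | ∃ l : List (Equiv.Perm (Fin n)),
    (∀ τ ∈ l, τ.IsSwap) ∧ l.length = k ∧ l.prod = w}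

/-- The orbit of `a` under the cyclic group generated by `w` (as a `Finset`). -/
def orbitF {n : ℕ} (w : Equiv.Perm (Fin n)) (a : Fin n) : Finset (Fin n) :=
  Finset.image (fun k : Fin n => (w ^ (k : ℕ)) a) Finset.univ

/-- The Newton vector of `w ε^λ`:
`ν_a = (1/|O|) Σ_{b ∈ O} λ_b`, where `O` is the `⟨w⟩`-orbit of `a`. -/
def newtonQ {n : ℕ} (w : Equiv.Perm (Fin n)) (lam : Fin n → ℚ) (a : Fin n) : ℚ :=
  (∑ b ∈ orbitF w a, lam b) / ((orbitF w a).card : ℚ)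

lemma self_mem_orbitF {n : ℕ} [NeZero n] (w : Equiv.Perm (Fin n)) (a : Fin n) :
    a ∈ orbitF w a := by
  refine Finset.mem_image.2 ⟨⟨0, Nat.pos_of_ne_zero (NeZero.ne n)⟩, Finset.mem_univ _, ?_⟩
  simp

lemma pow_mem_orbitF {n : ℕ} [NeZero n] (w : Equiv.Perm (Fin n)) (a : Fin n) (m : ℕ) :
    (w ^ m) a ∈ orbitF w a := by
  -- pigeonhole: among w^0 a, ..., w^n a two coincide
  obtain ⟨i', j', hne, hij'⟩ := Fintype.exists_ne_map_eq_of_card_lt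
    (fun k : Fin (n + 1) => (w ^ (k : ℕ)) a) (by simp)
  have key : ∀ i j : Fin (n + 1), (i : ℕ) < (j : ℕ) →
      (w ^ (i : ℕ)) a = (w ^ (j : ℕ)) a → (w ^ m) a ∈ orbitF w a := by
    intro i j hlt hij
    set d := (j : ℕ) - (i : ℕ) with hd
    have hdpos : 0 < d := by omega
    have hdle : d ≤ n := by have := j.isLt; omega
    have hfix : (w ^ d) a = a := by
      have h1 : (w ^ (i : ℕ)) ((w ^ d) a) = (w ^ (i : ℕ)) a := by
        rw [← Equiv.Perm.mul_apply, ← pow_add, hd]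
        rw [Nat.add_sub_cancel' (le_of_lt hlt)]
        exact hij.symm
      exact (w ^ (i : ℕ)).injective h1
    have hqd : ∀ q : ℕ, (w ^ (d * q)) a = a := by
      intro q
      induction q with
      | zero => simp
      | succ q ihq =>
        rw [Nat.mul_succ, pow_add, Equiv.Perm.mul_apply, hfix, ihq]
    have hmod : (w ^ m) a = (w ^ (m % d)) a := by
      conv_lhs => rw [← Nat.mod_add_div m d]
      rw [pow_add, Equiv.Perm.mul_apply, hqd]
    rw [hmod]
    have hr : m % d < n := lt_of_lt_of_le (Nat.mod_lt _ hdpos) hdle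
    exact Finset.mem_image.2 ⟨⟨m % d, hr⟩, Finset.mem_univ _, rfl⟩
  rcases lt_or_gt_of_ne (fun h : (i' : ℕ) = (j' : ℕ) => hne (Fin.ext h)) with h | h
  · exact key i' j' h hij'
  · exact key j' i' h hij'.symm

lemma apply_mem_orbitF {n : ℕ} [NeZero n] (w : Equiv.Perm (Fin n)) (a b : Fin n)
    (hb : b ∈ orbitF w a) : w b ∈ orbitF w a := by
  obtain ⟨k, -, rfl⟩ := Finset.mem_image.1 hb
  have : w ((w ^ (k : ℕ)) a) = (w ^ ((k : ℕ) + 1)) a := by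
    rw [pow_succ']
    rfl
  rw [this]
  exact pow_mem_orbitF w a _

lemma orbitF_subset_of_invariant {n : ℕ} (w : Equiv.Perm (Fin n)) (a : Fin n)
    (S : Finset (Fin n)) (ha : a ∈ S) (hS : ∀ b ∈ S, w b ∈ S) :
    orbitF w a ⊆ S := by
  intro b hb
  obtain ⟨k, -, rfl⟩ := Finset.mem_image.1 hb
  clear hb
  induction (k : ℕ) with
  | zero => simpa using ha
  | succ m ih =>
    have : (w ^ (m + 1)) a = w ((w ^ m) a) := by rw [pow_succ', Equiv.Perm.mul_apply]
    rw [this]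
    exact hS _ ih

lemma main_induction {n : ℕ} [NeZero n] :
    ∀ (l : List (Equiv.Perm (Fin n))), (∀ τ ∈ l, τ.IsSwap) →
    ∀ (E : Finset (Fin n)), l.length < E.card →
    ∃ a ∈ E, orbitF l.prod a ⊆ E := by
  intro l
  induction l with
  | nil =>
    intro _ E hE
    obtain ⟨a, ha⟩ := Finset.card_pos.1 (by simpa using hE)
    refine ⟨a, ha, orbitF_subset_of_invariant _ _ _ ha ?_⟩
    simp
  | cons τ t ih =>
    intro hswap E hE
    obtain ⟨x, y, hxy, rfl⟩ := hswap τ List.mem_cons_self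
    have htswap : ∀ σ ∈ t, σ.IsSwap := fun σ hσ => hswap σ (List.mem_cons_of_mem _ hσ)
    set v := t.prod with hv
    have hlen : t.length < (E.erase x).card := by
      have := Finset.pred_card_le_card_erase (a := x) (s := E)
      simp only [List.length_cons] at hE
      omega
    obtain ⟨a, haE, haO⟩ := ih htswap (E.erase x) hlen
    set O' := orbitF v a with hO'
    have hO'E : O' ⊆ E.erase x := haO
    have hprod : (Equiv.swap x y :: t).prod = Equiv.swap x y * v := by simp [hv]
    by_cases hy : y ∈ O'
    · -- second IH application with erase y
      have hlen2 : t.length < (E.erase y).card := by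
        have := Finset.pred_card_le_card_erase (a := y) (s := E)
        simp only [List.length_cons] at hE
        omega
      obtain ⟨b, hbE, hbO⟩ := ih htswap (E.erase y) hlen2
      set O'' := orbitF v b with hO''
      by_cases hx : x ∈ O''
      · -- union is invariant
        refine ⟨a, Finset.mem_of_mem_erase haE, ?_⟩
        rw [hprod]
        have hsub : O' ∪ O'' ⊆ E := by
          intro z hz
          rcases Finset.mem_union.1 hz with h | h
          · exact Finset.mem_of_mem_erase (haO h)
          · exact Finset.mem_of_mem_erase (hbO h)
        refine (orbitF_subset_of_invariant _ _ (O' ∪ O'')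
          (Finset.mem_union_left _ (self_mem_orbitF v a)) ?_).trans hsub
        intro z hz
        have hvz : v z ∈ O' ∪ O'' := by
          rcases Finset.mem_union.1 hz with h | h
          · exact Finset.mem_union_left _ (apply_mem_orbitF v a z h)
          · exact Finset.mem_union_right _ (apply_mem_orbitF v b z h)
        simp only [Equiv.Perm.mul_apply]
        by_cases h1 : v z = x
        · rw [h1, Equiv.swap_apply_left]
          exact Finset.mem_union_left _ hy
        · by_cases h2 : v z = y
          · rw [h2, Equiv.swap_apply_right]
            exact Finset.mem_union_right _ hx
          · rw [Equiv.swap_apply_of_ne_of_ne h1 h2]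
            exact hvz
      · -- O'' avoids both x and y
        refine ⟨b, Finset.mem_of_mem_erase hbE, ?_⟩
        rw [hprod]
        have hsub : O'' ⊆ E := fun z hz => Finset.mem_of_mem_erase (hbO hz)
        refine (orbitF_subset_of_invariant _ _ O'' (self_mem_orbitF v b) ?_).trans hsub
        intro z hz
        have hvz : v z ∈ O'' := apply_mem_orbitF v b z hz
        have h1 : v z ≠ x := fun h => hx (h ▸ hvz)
        have h2 : v z ≠ y := fun h => Finset.ne_of_mem_erase (hbO hvz) (by rw [← h])
        simp only [Equiv.Perm.mul_apply, Equiv.swap_apply_of_ne_of_ne h1 h2]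
        exact hvz
    · -- O' avoids both x and y
      refine ⟨a, Finset.mem_of_mem_erase haE, ?_⟩
      rw [hprod]
      have hsub : O' ⊆ E := fun z hz => Finset.mem_of_mem_erase (haO hz)
      refine (orbitF_subset_of_invariant _ _ O' (self_mem_orbitF v a) ?_).trans hsub
      intro z hz
      have hvz : v z ∈ O' := apply_mem_orbitF v a z hz
      have h1 : v z ≠ x := fun h => Finset.ne_of_mem_erase (haO hvz) (by rw [← h])
      have h2 : v z ≠ y := fun h => hy (h ▸ hvz)
      simp only [Equiv.Perm.mul_apply, Equiv.swap_apply_of_ne_of_ne h1 h2]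
      exact hvz

theorem stmt14 (n : ℕ) (hn : 1 ≤ n) (w : Equiv.Perm (Fin n)) (lam : Fin n → ℚ)
    (c : ℚ) (hc : IsGreatest (Set.range lam) c)
    (hlt : reflLength w < (Finset.univ.filter fun a : Fin n => lam a = c).card) :
    ∃ a : Fin n, newtonQ w lam a = c := by
  haveI : NeZero n := ⟨by omega⟩
  set E := Finset.univ.filter fun a : Fin n => lam a = c with hEdef
  -- reflLength is attained
  have hne : {k | ∃ l : List (Equiv.Perm (Fin n)),
      (∀ τ ∈ l, τ.IsSwap) ∧ l.length = k ∧ l.prod = w}.Nonempty := by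
    obtain ⟨l, hl1, hl2⟩ := (Equiv.Perm.truncSwapFactors w).out
    exact ⟨l.length, l, hl2, rfl, hl1⟩
  obtain ⟨l, hl1, hl2, hl3⟩ := Nat.sInf_mem hne
  have hlen : l.length < E.card := by rw [hl2]; exact hlt
  obtain ⟨a, haE, haO⟩ := main_induction l hl1 E hlen
  rw [hl3] at haO
  refine ⟨a, ?_⟩
  have hcard : (orbitF w a).card ≠ 0 :=
    Finset.card_ne_zero_of_mem (self_mem_orbitF w a)
  have hsum : ∑ b ∈ orbitF w a, lam b = (orbitF w a).card • c := by
    rw [Finset.sum_congr rfl fun b hb => ?_, Finset.sum_const]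
    have := haO hb
    rw [hEdef, Finset.mem_filter] at this
    exact this.2
  rw [newtonQ, hsum, nsmul_eq_mul, mul_comm, mul_div_assoc, div_self (by exact_mod_cast hcard), mul_one]
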